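/- arXiv:2012.10111 — 4 statements merged into one kernel-verified Lean document; each statement's English description precedes it below -/
import Mathlib

section
/- Let K be a positive integer, let P > 0 and σ² > 0 be real numbers, and for k = 1,…,K let w_k ≥ 0, H_k ≥ 0 and r_k ≥ 0 be real numbers. Define S_k = ∑_{j=k+1}^{K} w_j · P · H_j + σ² (so S_K = σ²). If w_k · P · H_k ≥ r_k · S_k for every k = 1,…,K, then for every k = 0,1,…,K one has S_k ≥ σ² · ∏_{j=k+1}^{K} (r_j + 1). -/
/-- Key induction behind eq. (11): lower bound on interference-plus-noise power at stage k. -/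
theorem interference_lower_bound (K : ℕ) (hK : 0 < K) (P σ2 : ℝ) (hP : 0 < P) (hσ : 0 < σ2)
    (w H r : ℕ → ℝ) (hw : ∀ k, 0 ≤ w k) (hH : ∀ k, 0 ≤ H k) (hr : ∀ k, 0 ≤ r k)
    (S : ℕ → ℝ)
    (hS : ∀ k, S k = (∑ j ∈ Finset.Icc (k + 1) K, w j * P * H j) + σ2)
    (hcon : ∀ k ∈ Finset.Icc 1 K, w k * P * H k ≥ r k * S k) :
    ∀ k ≤ K, S k ≥ σ2 * ∏ j ∈ Finset.Icc (k + 1) K, (r j + 1) := by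
  -- downward induction via m = K - k
  suffices h : ∀ m k, k ≤ K → K - k = m → S k ≥ σ2 * ∏ j ∈ Finset.Icc (k + 1) K, (r j + 1) by
    intro k hk; exact h (K - k) k hk rfl
  intro m
  induction m with
  | zero =>
    intro k hk hm
    have hkK : k = K := le_antisymm hk (Nat.le_of_sub_eq_zero hm)
    subst hkK
    rw [hS, Finset.Icc_eq_empty (by omega)]
    simp
  | succ n ih =>
    intro k hk hm
    have hkK : k < K := by omega
    have hsplit : Finset.Icc (k + 1) K = insert (k + 1) (Finset.Icc (k + 2) K) := by
      ext x; simp [Finset.mem_Icc]; omega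
    have hSrec : S k = w (k+1) * P * H (k+1) + S (k+1) := by
      rw [hS k, hS (k+1), hsplit, Finset.sum_insert (by simp)]
      ring
    have hih : S (k+1) ≥ σ2 * ∏ j ∈ Finset.Icc (k + 2) K, (r j + 1) := ih (k+1) (by omega) (by omega)
    have hc : w (k+1) * P * H (k+1) ≥ r (k+1) * S (k+1) :=
      hcon (k+1) (Finset.mem_Icc.mpr ⟨by omega, by omega⟩)
    have hSpos : 0 ≤ σ2 * ∏ j ∈ Finset.Icc (k + 2) K, (r j + 1) := by
      apply mul_nonneg hσ.le
      exact Finset.prod_nonneg fun j _ => by linarith [hr j]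
    have : S k ≥ (r (k+1) + 1) * S (k+1) := by
      rw [hSrec]; nlinarith
    calc S k ≥ (r (k+1) + 1) * S (k+1) := this
      _ ≥ (r (k+1) + 1) * (σ2 * ∏ j ∈ Finset.Icc (k + 2) K, (r j + 1)) := by
          apply mul_le_mul_of_nonneg_left hih (by linarith [hr (k+1)])
      _ = σ2 * ∏ j ∈ Finset.Icc (k + 1) K, (r j + 1) := by
          rw [hsplit, Finset.prod_insert (by simp)]; ring
end

section
/- Let K be a positive integer, let P > 0 and σ² > 0 be real numbers, and for k = 1,…,K let w_k ≥ 0, H_k > 0 and r_k ≥ 0 be real numbers. If w_k · P · H_k ≥ r_k · ( ∑_{j=k+1}^{K} w_j · P · H_j + σ² ) for every k = 1,…,K, then for every k, w_k ≥ ( σ² · r_k / (P · H_k) ) · ∏_{j=k+1}^{K} (r_j + 1). -/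
/-- Eq. (11): QoS constraints force each power reflection coefficient above its lower bound. -/
theorem power_reflection_lower_bound (K : ℕ) (hK : 0 < K) (P σ2 : ℝ) (hP : 0 < P) (hσ : 0 < σ2)
    (w H r : ℕ → ℝ) (hw : ∀ k, 0 ≤ w k) (hH : ∀ k, 0 < H k) (hr : ∀ k, 0 ≤ r k)
    (hcon : ∀ k ∈ Finset.Icc 1 K, w k * P * H k ≥
      r k * ((∑ j ∈ Finset.Icc (k + 1) K, w j * P * H j) + σ2)) :
    ∀ k ∈ Finset.Icc 1 K,
      w k ≥ (σ2 * r k / (P * H k)) * ∏ j ∈ Finset.Icc (k + 1) K, (r j + 1) := by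
  have hprod : ∀ k, (0:ℝ) ≤ ∏ j ∈ Finset.Icc k K, (r j + 1) := by
    intro k
    exact Finset.prod_nonneg fun j _ => by linarith [hr j]
  have key : ∀ n k, 1 ≤ k → K + 1 - k ≤ n →
      σ2 * ∏ j ∈ Finset.Icc k K, (r j + 1) ≤
        (∑ j ∈ Finset.Icc k K, w j * P * H j) + σ2 := by
    intro n
    induction n with
    | zero =>
      intro k hk1 hkn
      have hkK : K < k := by omega
      rw [Finset.Icc_eq_empty (by omega)]
      simp
    | succ n ih =>
      intro k hk1 hkn
      by_cases h : K < k
      · rw [Finset.Icc_eq_empty (by omega)]; simp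
      · push_neg at h
        have hins : Finset.Icc k K = insert k (Finset.Icc (k+1) K) := by
          ext x; simp [Finset.mem_Icc]; omega
        have hnot : k ∉ Finset.Icc (k+1) K := by simp
        have hsum := ih (k+1) (by omega) (by omega)
        have hc := hcon k (Finset.mem_Icc.mpr ⟨hk1, h⟩)
        rw [hins, Finset.sum_insert hnot, Finset.prod_insert hnot]
        have hp := hprod (k+1)
        nlinarith [hr k, mul_le_mul_of_nonneg_left hsum (hr k)]
  intro k hk
  rw [Finset.mem_Icc] at hk
  have hkey := key K (k+1) (by omega) (by omega)
  have hc := hcon k (Finset.mem_Icc.mpr hk)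
  have hPH : (0:ℝ) < P * H k := mul_pos hP (hH k)
  rw [ge_iff_le, div_mul_eq_mul_div, div_le_iff₀ hPH]
  have := mul_le_mul_of_nonneg_left hkey (hr k)
  nlinarith
end

section
/- Let K be a positive integer, let P > 0 and σ² > 0 be real numbers, and for k = 1,…,K let H_k > 0 and r_k ≥ 0 be real numbers. Define w_k^LB = ( σ² · r_k / (P · H_k) ) · ∏_{j=k+1}^{K} (r_j + 1). Then the point w_k = w_k^LB satisfies every quality-of-service constraint with equality: for every k = 1,…,K, w_k^LB · P · H_k = r_k · ( ∑_{j=k+1}^{K} w_j^LB · P · H_j + σ² ). -/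
lemma key_telescope (r : ℕ → ℝ) (b : ℕ) :
    ∀ n a, b + 1 - a ≤ n →
      (∑ j ∈ Finset.Icc a b, r j * ∏ i ∈ Finset.Icc (j+1) b, (r i + 1)) + 1
        = ∏ j ∈ Finset.Icc a b, (r j + 1) := by
  intro n
  induction n with
  | zero =>
    intro a h
    rw [Finset.Icc_eq_empty (by omega)]
    simp
  | succ n ih =>
    intro a h
    by_cases hab : a ≤ b
    · have hins : Finset.Icc a b = insert a (Finset.Icc (a+1) b) := by
        ext x; simp; omega
      rw [hins, Finset.sum_insert (by simp), Finset.prod_insert (by simp)]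
      rw [add_assoc, ih (a+1) (by omega)]
      ring
    · rw [Finset.Icc_eq_empty (by omega)]
      simp

/-- Tightness of the lower bounds of eq. (11): at w = w^LB every QoS constraint is an equality. -/
theorem lower_bounds_tight (K : ℕ) (hK : 0 < K) (P σ2 : ℝ) (hP : 0 < P) (hσ : 0 < σ2)
    (H r : ℕ → ℝ) (hH : ∀ k, 0 < H k) (hr : ∀ k, 0 ≤ r k)
    (wLB : ℕ → ℝ)
    (hwLB : ∀ k, wLB k =
      (σ2 * r k / (P * H k)) * ∏ j ∈ Finset.Icc (k + 1) K, (r j + 1)) :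
    ∀ k ∈ Finset.Icc 1 K,
      wLB k * P * H k =
        r k * ((∑ j ∈ Finset.Icc (k + 1) K, wLB j * P * H j) + σ2) := by
  intro k _
  have hterm : ∀ j, wLB j * P * H j = σ2 * r j * ∏ i ∈ Finset.Icc (j+1) K, (r i + 1) := by
    intro j
    rw [hwLB j]
    have hne : P * H j ≠ 0 := mul_ne_zero hP.ne' (hH j).ne'
    have hHj : H j ≠ 0 := (hH j).ne'
    field_simp
  rw [hterm]
  have hsum : ∀ j ∈ Finset.Icc (k+1) K, wLB j * P * H j
      = σ2 * (r j * ∏ i ∈ Finset.Icc (j+1) K, (r i + 1)) := by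
    intro j _; rw [hterm]; ring
  rw [Finset.sum_congr rfl hsum, ← Finset.mul_sum]
  have hkey := key_telescope r K (K + 1 - (k+1)) (k+1) le_rfl
  have : (∑ j ∈ Finset.Icc (k+1) K, r j * ∏ i ∈ Finset.Icc (j+1) K, (r i + 1))
      = (∏ j ∈ Finset.Icc (k+1) K, (r j + 1)) - 1 := by linarith
  rw [this]
  ring
end

section
/- Let K be a positive integer, let P > 0 and σ² > 0 be real numbers, and for k = 1,…,K let H_k ≥ 0 and r_k ≥ 0 be real numbers. Suppose w = (w_1,…,w_K) ∈ [0,1]^K satisfies w_k · P · H_k ≥ r_k · ( ∑_{j=k+1}^{K} w_j · P · H_j + σ² ) for every k. Define w' by w'_1 = 1 and w'_k = w_k for k ≥ 2. Then w' ∈ [0,1]^K, w' also satisfies all the constraints w'_k · P · H_k ≥ r_k · ( ∑_{j=k+1}^{K} w'_j · P · H_j + σ² ), and ∑_{k=1}^{K} w'_k · H_k ≥ ∑_{k=1}^{K} w_k · H_k. Consequently, if the feasible set is nonempty, the maximum of ∑_{k=1}^{K} w_k H_k over the feasible set is attained at a point with w_1 = 1. -/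
/-- Feasibility for the power reflection coefficient optimization problem:
w ∈ [0,1]^K together with the QoS constraints. -/
def Feasible (K : ℕ) (P σ2 : ℝ) (H r : ℕ → ℝ) (w : ℕ → ℝ) : Prop :=
  (∀ k ∈ Finset.Icc 1 K, 0 ≤ w k ∧ w k ≤ 1) ∧
  (∀ k ∈ Finset.Icc 1 K,
    w k * P * H k ≥ r k * ((∑ j ∈ Finset.Icc (k + 1) K, w j * P * H j) + σ2))

lemma aux_part1 (K : ℕ) (hK : 0 < K) (P σ2 : ℝ) (hP : 0 < P)
    (H r : ℕ → ℝ) (hH : ∀ k, 0 ≤ H k)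
    (w : ℕ → ℝ) (hw : Feasible K P σ2 H r w) :
    Feasible K P σ2 H r (fun k => if k = 1 then 1 else w k) ∧
    (∑ k ∈ Finset.Icc 1 K, (if k = 1 then (1:ℝ) else w k) * H k) ≥
      ∑ k ∈ Finset.Icc 1 K, w k * H k := by
  obtain ⟨hb, hc⟩ := hw
  have h1K : 1 ∈ Finset.Icc 1 K := by rw [Finset.mem_Icc]; omega
  have hsum : ∀ k, 1 ≤ k →
      (∑ j ∈ Finset.Icc (k+1) K, (if j = 1 then (1:ℝ) else w j) * P * H j)
        = ∑ j ∈ Finset.Icc (k+1) K, w j * P * H j := by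
    intro k hk
    refine Finset.sum_congr rfl fun j hj => ?_
    have hj1 : j ≠ 1 := by
      have := (Finset.mem_Icc.mp hj).1; omega
    simp [hj1]
  constructor
  · constructor
    · intro k hk
      by_cases h : k = 1
      · simp [h]
      · simpa [h] using hb k hk
    · intro k hk
      have hk1 := (Finset.mem_Icc.mp hk).1
      by_cases h : k = 1
      · subst h
        simp only [if_pos rfl]
        rw [hsum 1 le_rfl]
        have h1 := hc 1 h1K
        have hw1 := (hb 1 h1K).2
        rw [if_pos trivial]
        nlinarith [mul_nonneg hP.le (hH 1)]
      · simp only [if_neg h]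
        rw [hsum k hk1]
        exact hc k hk
  · refine Finset.sum_le_sum fun k hk => ?_
    by_cases h : k = 1
    · subst h
      simp only [if_true, one_mul]
      have hw1 := (hb 1 h1K).2
      nlinarith [hH 1]
    · simp [h]

lemma aux_trunc (K : ℕ) (P σ2 : ℝ) (H r : ℕ → ℝ)
    (w : ℕ → ℝ) (hw : Feasible K P σ2 H r w) :
    Feasible K P σ2 H r (fun k => if k ∈ Finset.Icc 1 K then w k else 0) := by
  obtain ⟨hb, hc⟩ := hw
  constructor
  · intro k hk; simpa [hk] using hb k hk
  · intro k hk
    have hk1 := (Finset.mem_Icc.mp hk).1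
    have hsum : (∑ j ∈ Finset.Icc (k+1) K,
        (if j ∈ Finset.Icc 1 K then w j else 0) * P * H j)
        = ∑ j ∈ Finset.Icc (k+1) K, w j * P * H j := by
      refine Finset.sum_congr rfl fun j hj => ?_
      have hj' : j ∈ Finset.Icc 1 K := by
        rw [Finset.mem_Icc] at hj ⊢; omega
      simp [hj']
    simp only [if_pos hk]
    rw [hsum]
    exact hc k hk

/-- Theorem 1, first assertion: the optimum has w₁ = 1. -/
theorem optimal_w1_eq_one (K : ℕ) (hK : 0 < K) (P σ2 : ℝ) (hP : 0 < P) (hσ : 0 < σ2)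
    (H r : ℕ → ℝ) (hH : ∀ k, 0 ≤ H k) (hr : ∀ k, 0 ≤ r k) :
    (∀ w : ℕ → ℝ, Feasible K P σ2 H r w →
      Feasible K P σ2 H r (fun k => if k = 1 then 1 else w k) ∧
      (∀ k ∈ Finset.Icc 1 K, 0 ≤ (if k = 1 then (1 : ℝ) else w k) ∧
        (if k = 1 then (1 : ℝ) else w k) ≤ 1) ∧
      (∑ k ∈ Finset.Icc 1 K, (if k = 1 then (1 : ℝ) else w k) * H k) ≥
        ∑ k ∈ Finset.Icc 1 K, w k * H k) ∧
    ((∃ w, Feasible K P σ2 H r w) →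
      ∃ w, Feasible K P σ2 H r w ∧ w 1 = 1 ∧
        ∀ w', Feasible K P σ2 H r w' →
          ∑ k ∈ Finset.Icc 1 K, w' k * H k ≤ ∑ k ∈ Finset.Icc 1 K, w k * H k) := by
  constructor
  · intro w hw
    obtain ⟨hf, hs⟩ := aux_part1 K hK P σ2 hP H r hH w hw
    exact ⟨hf, hf.1, hs⟩
  · rintro ⟨w0, hw0⟩
    -- compactness argument
    set f : (ℕ → ℝ) → ℝ := fun w => ∑ k ∈ Finset.Icc 1 K, w k * H k with hf_def
    have hf_cont : Continuous f :=
      continuous_finset_sum _ fun k _ => (continuous_apply k).mul continuous_const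
    set T : Set (ℕ → ℝ) :=
      {w | Feasible K P σ2 H r w ∧ ∀ k, k ∉ Finset.Icc 1 K → w k = 0} with hT_def
    have hTclosed : IsClosed T := by
      have : T = (⋂ k ∈ Finset.Icc 1 K,
          ({w : ℕ → ℝ | 0 ≤ w k} ∩ {w | w k ≤ 1} ∩
           {w | r k * ((∑ j ∈ Finset.Icc (k+1) K, w j * P * H j) + σ2) ≤ w k * P * H k}))
          ∩ (⋂ k ∈ {k : ℕ | k ∉ Finset.Icc 1 K}, {w : ℕ → ℝ | w k = 0}) := by
        ext w
        simp only [hT_def, Feasible, Set.mem_setOf_eq, Set.mem_inter_iff, Set.mem_iInter,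
          ge_iff_le]
        constructor
        · rintro ⟨⟨hb, hc⟩, hz⟩
          exact ⟨fun k hk => ⟨⟨(hb k hk).1, (hb k hk).2⟩, hc k hk⟩, fun k hk => hz k hk⟩
        · rintro ⟨h1, h2⟩
          exact ⟨⟨fun k hk => ⟨(h1 k hk).1.1, (h1 k hk).1.2⟩, fun k hk => (h1 k hk).2⟩,
            fun k hk => h2 k hk⟩
      rw [this]
      refine IsClosed.inter ?_ ?_
      · refine isClosed_biInter fun k _ => ?_
        refine IsClosed.inter (IsClosed.inter ?_ ?_) ?_
        · exact isClosed_le continuous_const (continuous_apply k)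
        · exact isClosed_le (continuous_apply k) continuous_const
        · refine isClosed_le ?_ ?_
          · exact continuous_const.mul ((continuous_finset_sum _ fun j _ =>
              ((continuous_apply j).mul continuous_const).mul continuous_const).add
              continuous_const)
          · exact ((continuous_apply k).mul continuous_const).mul continuous_const
      · exact isClosed_biInter fun k _ => isClosed_eq (continuous_apply k) continuous_const
    have hTsub : T ⊆ Set.Icc (0 : ℕ → ℝ)
        (fun k => if k ∈ Finset.Icc 1 K then 1 else 0) := by
      rintro w ⟨⟨hb, _⟩, hz⟩
      constructor
      · intro k
        by_cases hk : k ∈ Finset.Icc 1 K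
        · exact (hb k hk).1
        · simp [hz k hk]
      · intro k
        by_cases hk : k ∈ Finset.Icc 1 K
        · simpa [hk] using (hb k hk).2
        · simp [hk, hz k hk]
    have hTcompact : IsCompact T :=
      (isCompact_Icc).of_isClosed_subset hTclosed hTsub
    have hTne : T.Nonempty := by
      refine ⟨fun k => if k ∈ Finset.Icc 1 K then w0 k else 0,
        aux_trunc K P σ2 H r w0 hw0, fun k hk => by simp [hk]⟩
    obtain ⟨v, hvT, hvmax⟩ := hTcompact.exists_isMaxOn hTne hf_cont.continuousOn
    obtain ⟨hvfeas, hvsum⟩ := aux_part1 K hK P σ2 hP H r hH v hvT.1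
    refine ⟨fun k => if k = 1 then 1 else v k, hvfeas, by simp, ?_⟩
    intro w' hw'
    have htr : (fun k => if k ∈ Finset.Icc 1 K then w' k else 0) ∈ T :=
      ⟨aux_trunc K P σ2 H r w' hw', fun k hk => by simp [hk]⟩
    have h1 : f w' = f (fun k => if k ∈ Finset.Icc 1 K then w' k else 0) :=
      (Finset.sum_congr rfl fun k hk => by simp [hk]).symm
    have h2 := hvmax htr
    calc ∑ k ∈ Finset.Icc 1 K, w' k * H k
        = f (fun k => if k ∈ Finset.Icc 1 K then w' k else 0) := h1
      _ ≤ f v := h2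
      _ ≤ ∑ k ∈ Finset.Icc 1 K, (if k = 1 then (1:ℝ) else v k) * H k := hvsum
end
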